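/- arXiv:2212.05905 — 2 statements merged into one kernel-verified Lean document; each statement's English description precedes it below -/
import Mathlib

section
/- (Transformation lemma) Let u ∈ C⁴ be uniformly convex on Ω ⊂ ℝⁿ with cofactor matrix U of D²u, let w = (det D²u)⁻¹, and suppose Σ U^{ij} D_{ij} w = f/ε in Ω. Fix x₀ ∈ Ω̄ and a constant D* > 0, and define F(x) = D*|x − Du(x₀)|²/(2ε), η(x) = w(x) e^{F(Du(x))}, and b(x) = −(det D²u(x)) (D*/ε)(Du(x) − Du(x₀)). Then Σ U^{ij} D_{ij} η + b · Dη = ((f + D* Δu)/ε) e^{F(Du(x))} in Ω. -/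
open RealInnerProductSpace Matrix

section Aux

variable {E : Type*} [NormedAddCommGroup E] [NormedSpace ℝ E] {n : ℕ}
  {M : E → Matrix (Fin n) (Fin n) ℝ} {x : E}

theorem contDiffAt_det' {m : ℕ∞} (h : ∀ i j, ContDiffAt ℝ m (fun y => M y i j) x) :
    ContDiffAt ℝ m (fun y => (M y).det) x := by
  simp only [Matrix.det_apply']
  exact ContDiffAt.sum fun σ _ =>
    contDiffAt_const.mul (contDiffAt_prod fun i _ => h (σ i) i)

theorem det_expand_aux (A : Matrix (Fin n) (Fin n) ℝ) (i : Fin n) (c : Fin n → ℝ) :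
    ∑ σ : Equiv.Perm (Fin n), ((Equiv.Perm.sign σ : ℤ) : ℝ) *
        ((∏ j ∈ Finset.univ.erase i, A (σ j) j) * c (σ i)) =
      ∑ a, A.adjugate i a * c a := by
  have h1 : ∑ σ : Equiv.Perm (Fin n), ((Equiv.Perm.sign σ : ℤ) : ℝ) *
      ((∏ j ∈ Finset.univ.erase i, A (σ j) j) * c (σ i)) =
      (A.updateCol i c).det := by
    rw [Matrix.det_apply']
    refine Finset.sum_congr rfl fun σ _ => ?_
    have e1 : A.updateCol i c (σ i) i = c (σ i) := by
      rw [Matrix.updateCol_apply, if_pos rfl]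
    have e2 : ∏ j ∈ Finset.univ.erase i, A.updateCol i c (σ j) j =
        ∏ j ∈ Finset.univ.erase i, A (σ j) j :=
      Finset.prod_congr rfl fun j hj => by
        rw [Matrix.updateCol_apply, if_neg (Finset.ne_of_mem_erase hj)]
    rw [← Finset.mul_prod_erase _ _ (Finset.mem_univ i), e1, e2]
    ring
  rw [h1, ← Matrix.cramer_apply, Matrix.cramer_eq_adjugate_mulVec]
  simp [Matrix.mulVec, dotProduct]

theorem jacobi {M' : Fin n → Fin n → E →L[ℝ] ℝ}
    (h : ∀ i j, HasFDerivAt (fun y => M y i j) (M' i j) x) :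
    HasFDerivAt (fun y => (M y).det)
      (∑ i, ∑ j, (M x).adjugate j i • M' i j) x := by
  have H : HasFDerivAt (fun y => (M y).det)
      (∑ σ : Equiv.Perm (Fin n), (((Equiv.Perm.sign σ : ℤ) : ℝ)) •
        (∑ i, (∏ j ∈ Finset.univ.erase i, M x (σ j) j) • M' (σ i) i)) x := by
    simp only [Matrix.det_apply']
    exact HasFDerivAt.fun_sum fun σ _ =>
      ((HasFDerivAt.finset_prod (fun i _ => h (σ i) i)).const_mul _)
  convert H using 1
  ext v
  simp only [ContinuousLinearMap.coe_sum', Finset.sum_apply, ContinuousLinearMap.coe_smul',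
    Pi.smul_apply, smul_eq_mul, Finset.mul_sum]
  have rhs1 : ∀ i : Fin n,
      ∑ σ : Equiv.Perm (Fin n), ((Equiv.Perm.sign σ : ℤ) : ℝ) *
        ((∏ j ∈ Finset.univ.erase i, M x (σ j) j) * M' (σ i) i v) =
      ∑ a, (M x).adjugate i a * M' a i v := fun i =>
    det_expand_aux (M x) i (fun a => M' a i v)
  calc ∑ i, ∑ j, (M x).adjugate j i * M' i j v
      = ∑ j, ∑ i, (M x).adjugate j i * M' i j v := Finset.sum_comm
    _ = ∑ i : Fin n, ∑ σ : Equiv.Perm (Fin n), ((Equiv.Perm.sign σ : ℤ) : ℝ) *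
          ((∏ j ∈ Finset.univ.erase i, M x (σ j) j) * M' (σ i) i v) := by
        refine Finset.sum_congr rfl fun i _ => ?_
        rw [rhs1 i]
    _ = ∑ σ : Equiv.Perm (Fin n), ∑ i, ((Equiv.Perm.sign σ : ℤ) : ℝ) *
          ((∏ j ∈ Finset.univ.erase i, M x (σ j) j) * M' (σ i) i v) := Finset.sum_comm

end Aux

/-- The `i`-th standard basis vector of `EuclideanSpace ℝ (Fin n)`. -/
noncomputable def es {n : ℕ} (i : Fin n) : EuclideanSpace ℝ (Fin n) :=
  EuclideanSpace.single i 1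

theorem gradient_coord {n : ℕ} (h : EuclideanSpace ℝ (Fin n) → ℝ)
    (z : EuclideanSpace ℝ (Fin n)) (i : Fin n) :
    gradient h z i = fderiv ℝ h z (es i) := by
  have h1 : gradient h z i = ⟪gradient h z, EuclideanSpace.single i 1⟫ := by
    rw [EuclideanSpace.inner_single_right]; simp
  rw [h1, gradient, InnerProductSpace.toDual_symm_apply]; rfl

theorem inner_expand {n : ℕ} (a b : EuclideanSpace ℝ (Fin n)) :
    ⟪a, b⟫ = ∑ i, a i * b i := by
  simp [PiLp.inner_apply, RCLike.inner_apply, mul_comm]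

/-- Second partial derivative `D_{ij} f`. -/
noncomputable def D2 {n : ℕ} (f : EuclideanSpace ℝ (Fin n) → ℝ)
    (x : EuclideanSpace ℝ (Fin n)) (i j : Fin n) : ℝ :=
  fderiv ℝ (fun y => fderiv ℝ f y (EuclideanSpace.single i 1)) x (EuclideanSpace.single j 1)

/-- Hessian matrix of `f` at `x`. -/
noncomputable def Hess {n : ℕ} (f : EuclideanSpace ℝ (Fin n) → ℝ)
    (x : EuclideanSpace ℝ (Fin n)) : Matrix (Fin n) (Fin n) ℝ :=
  Matrix.of fun i j => D2 f x i j

theorem D2_eq {n : ℕ} (f : EuclideanSpace ℝ (Fin n) → ℝ)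
    (x : EuclideanSpace ℝ (Fin n)) (i j : Fin n) :
    D2 f x i j = fderiv ℝ (fun y => fderiv ℝ f y (es i)) x (es j) := rfl

set_option maxHeartbeats 2000000 in
/-- the transformation lemma for the singular Abreu equation:
`η = w e^{F(Du)}` with drift `b` satisfies the transformed linearized
Monge–Ampère equation with right-hand side `((f + D* Δu)/ε) e^{F(Du)}`. -/
theorem stmt3 {n : ℕ} (Ω : Set (EuclideanSpace ℝ (Fin n)))
    (hΩo : IsOpen Ω) (hΩb : Bornology.IsBounded Ω)
    (u w f : EuclideanSpace ℝ (Fin n) → ℝ)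
    (U : EuclideanSpace ℝ (Fin n) → Matrix (Fin n) (Fin n) ℝ)
    (hu : ContDiffOn ℝ 4 u (closure Ω))
    (hconv : ∀ x ∈ closure Ω, (Hess u x).PosDef)
    (hU : ∀ x ∈ closure Ω, U x = (Hess u x).det • (Hess u x)⁻¹)
    (hw : ∀ x ∈ closure Ω, w x = ((Hess u x).det)⁻¹)
    (ε : ℝ) (hε : 0 < ε)
    (hPDE : ∀ x ∈ Ω, ∑ i, ∑ j, U x i j * D2 w x i j = f x / ε)
    (x₀ : EuclideanSpace ℝ (Fin n)) (hx₀ : x₀ ∈ closure Ω)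
    (Dstar : ℝ) (hDstar : 0 < Dstar)
    (F : EuclideanSpace ℝ (Fin n) → ℝ)
    (hF : ∀ p, F p = Dstar * ‖p - gradient u x₀‖ ^ 2 / (2 * ε))
    (η : EuclideanSpace ℝ (Fin n) → ℝ)
    (hη : ∀ x, η x = w x * Real.exp (F (gradient u x)))
    (b : EuclideanSpace ℝ (Fin n) → EuclideanSpace ℝ (Fin n))
    (hb : ∀ x, b x =
      (-((Hess u x).det * (Dstar / ε))) • (gradient u x - gradient u x₀)) :
    ∀ x ∈ Ω,
      (∑ i, ∑ j, U x i j * D2 η x i j) + ⟪b x, gradient η x⟫ =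
        ((f x + Dstar * ∑ i, D2 u x i i) / ε) * Real.exp (F (gradient u x)) := by
  intro x hx
  classical
  have hxc : x ∈ closure Ω := subset_closure hx
  set c : ℝ := Dstar / ε with hc
  set Q : EuclideanSpace ℝ (Fin n) → EuclideanSpace ℝ (Fin n) :=
    fun y => gradient u y - gradient u x₀ with hQ
  set g : EuclideanSpace ℝ (Fin n) → ℝ := fun y => Dstar * ‖Q y‖ ^ 2 / (2 * ε) with hg
  set ρ : EuclideanSpace ℝ (Fin n) → ℝ := fun y => (Hess u y).det with hρ
  -- basic smoothness
  have hmem : ∀ y ∈ Ω, closure Ω ∈ nhds y := fun y hy =>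
    Filter.mem_of_superset (hΩo.mem_nhds hy) subset_closure
  have huy : ∀ y ∈ Ω, ContDiffAt ℝ 4 u y := fun y hy =>
    (hu y (subset_closure hy)).contDiffAt (hmem y hy)
  have hf1 : ∀ y ∈ Ω, ContDiffAt ℝ 3 (fderiv ℝ u) y := fun y hy =>
    (huy y hy).fderiv_right (by norm_num)
  have hpkC : ∀ (k : Fin n), ∀ y ∈ Ω, ContDiffAt ℝ 3 (fun z => fderiv ℝ u z (es k)) y :=
    fun k y hy => (hf1 y hy).clm_apply contDiffAt_const
  have hHC : ∀ (k j : Fin n), ∀ y ∈ Ω, ContDiffAt ℝ 2 (fun z => D2 u z k j) y := by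
    intro k j y hy
    exact ((hpkC k y hy).fderiv_right (m := 2) (by norm_num)).clm_apply
      (contDiffAt_const (c := es j))
  -- bridge between iterated directional derivatives and the second fderiv
  have hbridge : ∀ (h : EuclideanSpace ℝ (Fin n) → ℝ) (y : EuclideanSpace ℝ (Fin n)),
      ContDiffAt ℝ 2 h y → ∀ i j,
      fderiv ℝ (fun z => fderiv ℝ h z (es i)) y (es j) =
        fderiv ℝ (fderiv ℝ h) y (es j) (es i) := by
    intro h y hC i j
    have hd : DifferentiableAt ℝ (fderiv ℝ h) y :=
      ((hC.fderiv_right (m := 1) (by norm_num)).differentiableAt one_ne_zero)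
    have h1 : HasFDerivAt (fun z => fderiv ℝ h z (es i))
        ((ContinuousLinearMap.apply ℝ ℝ (es i)).comp (fderiv ℝ (fderiv ℝ h) y)) y :=
      (ContinuousLinearMap.apply ℝ ℝ (es i)).hasFDerivAt.comp y hd.hasFDerivAt
    rw [h1.fderiv]; rfl
  have hsymH : ∀ y ∈ Ω, ∀ i j, D2 u y i j = D2 u y j i := by
    intro y hy i j
    have hs : IsSymmSndFDerivAt ℝ u y := (huy y hy).isSymmSndFDerivAt (by norm_num)
    rw [D2_eq, D2_eq, hbridge u y ((huy y hy).of_le (by norm_num)) i j,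
      hbridge u y ((huy y hy).of_le (by norm_num)) j i]
    exact hs (es j) (es i)
  -- gradient smoothness and coordinates
  have hGC : ∀ y ∈ Ω, ContDiffAt ℝ 3 (gradient u) y := fun y hy =>
    ((InnerProductSpace.toDual ℝ
      (EuclideanSpace ℝ (Fin n))).symm.contDiff.contDiffAt).comp y (hf1 y hy)
  have hGd : ∀ y ∈ Ω, HasFDerivAt (gradient u) (fderiv ℝ (gradient u) y) y :=
    fun y hy => ((hGC y hy).differentiableAt (by norm_num)).hasFDerivAt
  have hG'co : ∀ y ∈ Ω, ∀ (k : Fin n) (v : EuclideanSpace ℝ (Fin n)),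
      (fderiv ℝ (gradient u) y v) k = fderiv ℝ (fun z => fderiv ℝ u z (es k)) y v := by
    intro y hy k v
    have h1 : HasFDerivAt (fun z => fderiv ℝ u z (es k))
        ((EuclideanSpace.proj k).comp (fderiv ℝ (gradient u) y)) y := by
      have h2 := (EuclideanSpace.proj (𝕜 := ℝ) k).hasFDerivAt.comp y (hGd y hy)
      apply h2.congr_of_eventuallyEq
      filter_upwards with z
      show fderiv ℝ u z (es k) = (EuclideanSpace.proj (𝕜 := ℝ) k) (gradient u z)
      rw [← gradient_coord]; rfl
    rw [h1.fderiv]; rfl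
  -- derivative of g
  have hQd : ∀ y ∈ Ω, HasFDerivAt Q (fderiv ℝ (gradient u) y) y := fun y hy =>
    (hGd y hy).sub_const _
  have hgF : ∀ y, F (gradient u y) = g y := fun y => hF (gradient u y)
  have hgd : ∀ y ∈ Ω, HasFDerivAt g
      ((Dstar / (2 * ε)) • (2 • (innerSL ℝ (Q y)).comp (fderiv ℝ (gradient u) y))) y := by
    intro y hy
    have h1 := (hQd y hy).norm_sq
    have h2 := h1.const_mul (Dstar / (2 * ε))
    apply h2.congr_of_eventuallyEq
    filter_upwards with z
    show Dstar * ‖Q z‖ ^ 2 / (2 * ε) = Dstar / (2 * ε) * ‖Q z‖ ^ 2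
    ring
  have hval : ∀ y ∈ Ω, ∀ i,
      (((innerSL ℝ) (Q y)).comp (fderiv ℝ (gradient u) y)) (es i)
        = ∑ k, Q y k * D2 u y k i := by
    intro y hy i
    rw [ContinuousLinearMap.comp_apply, innerSL_apply_apply, inner_expand]
    refine Finset.sum_congr rfl fun k _ => ?_
    rw [hG'co y hy k (es i)]
    rfl
  have hεne : ε ≠ 0 := hε.ne'
  -- w facts
  have hρC : ∀ y ∈ Ω, ContDiffAt ℝ 2 ρ y := fun y hy =>
    contDiffAt_det' (fun i j => hHC i j y hy)
  have hρ0 : ∀ y ∈ closure Ω, ρ y ≠ 0 := fun y hy => (hconv y hy).det_pos.ne'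
  have hwev : ∀ y ∈ Ω, w =ᶠ[nhds y] fun z => (ρ z)⁻¹ := by
    intro y hy
    filter_upwards [hΩo.mem_nhds hy] with z hz
    exact hw z (subset_closure hz)
  have hwC : ∀ y ∈ Ω, ContDiffAt ℝ 2 w y := fun y hy =>
    ((hρC y hy).inv (hρ0 y (subset_closure hy))).congr_of_eventuallyEq (hwev y hy)
  have hwd : ∀ y ∈ Ω, HasFDerivAt w (fderiv ℝ w y) y := fun y hy =>
    ((hwC y hy).differentiableAt (by norm_num)).hasFDerivAt
  -- first derivative of η
  have hηd : ∀ y ∈ Ω, HasFDerivAt η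
      (w y • (Real.exp (g y) •
          ((Dstar / (2 * ε)) • (2 • (innerSL ℝ (Q y)).comp (fderiv ℝ (gradient u) y))))
        + Real.exp (g y) • fderiv ℝ w y) y := by
    intro y hy
    have h1 := (hwd y hy).mul ((hgd y hy).exp)
    apply h1.congr_of_eventuallyEq
    filter_upwards with z
    rw [hη z, hgF z]
    rfl
  have hηfd : ∀ y ∈ Ω, ∀ i, fderiv ℝ η y (es i) =
      (fderiv ℝ w y (es i) + w y * (c * ∑ k, Q y k * D2 u y k i)) * Real.exp (g y) := by
    intro y hy i
    rw [(hηd y hy).fderiv]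
    simp only [ContinuousLinearMap.add_apply, ContinuousLinearMap.smul_apply,
      smul_eq_mul, nsmul_eq_mul]
    rw [hval y hy i, hc]
    push_cast
    field_simp
    ring
  -- data at x
  set Dw : Fin n → ℝ := fun i => fderiv ℝ w x (es i) with hDwdef
  set Dg : Fin n → ℝ := fun i => c * ∑ k, Q x k * D2 u x k i with hDgdef
  set T : Fin n → Fin n → Fin n → ℝ :=
    fun k i j => fderiv ℝ (fun y => D2 u y k i) x (es j) with hTdef
  have hψ : ∀ i : Fin n, HasFDerivAt (fun y => fderiv ℝ w y (es i))
      (fderiv ℝ (fun y => fderiv ℝ w y (es i)) x) x := fun i =>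
    ((((hwC x hx).fderiv_right (m := 1) (by norm_num)).clm_apply
      (contDiffAt_const (c := es i))).differentiableAt one_ne_zero).hasFDerivAt
  have hψapp : ∀ i j : Fin n, fderiv ℝ (fun y => fderiv ℝ w y (es i)) x (es j) = D2 w x i j :=
    fun i j => rfl
  have hQk : ∀ k : Fin n, HasFDerivAt (fun y => Q y k)
      (fderiv ℝ (fun z => fderiv ℝ u z (es k)) x) x := by
    intro k
    have h1 : HasFDerivAt (fun z => fderiv ℝ u z (es k))
        (fderiv ℝ (fun z => fderiv ℝ u z (es k)) x) x :=
      ((hpkC k x hx).differentiableAt (by norm_num)).hasFDerivAt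
    have h2 := h1.sub_const (gradient u x₀ k)
    apply h2.congr_of_eventuallyEq
    filter_upwards with z
    show Q z k = fderiv ℝ u z (es k) - gradient u x₀ k
    show gradient u z k - gradient u x₀ k = fderiv ℝ u z (es k) - gradient u x₀ k
    rw [gradient_coord]
  have hQkapp : ∀ k j : Fin n,
      fderiv ℝ (fun z => fderiv ℝ u z (es k)) x (es j) = D2 u x k j := fun _ _ => rfl
  have hHk : ∀ k i : Fin n, HasFDerivAt (fun y => D2 u y k i)
      (fderiv ℝ (fun y => D2 u y k i) x) x :=
    fun k i => ((hHC k i x hx).differentiableAt (by norm_num)).hasFDerivAt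
  -- second derivative of η at x
  have hD2η : ∀ i j, D2 η x i j =
      (D2 w x i j + Dw j * Dg i
        + w x * (c * ∑ k, (D2 u x k j * D2 u x k i + Q x k * T k i j))
        + (Dw i + w x * Dg i) * Dg j) * Real.exp (g x) := by
    intro i j
    have hev : (fun y => fderiv ℝ η y (es i)) =ᶠ[nhds x]
        (fun y => (fderiv ℝ w y (es i) + w y * (c * ∑ k, Q y k * D2 u y k i))
          * Real.exp (g y)) := by
      filter_upwards [hΩo.mem_nhds hx] with z hz
      exact hηfd z hz i
    have hstep : D2 η x i j = fderiv ℝ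
        (fun y => (fderiv ℝ w y (es i) + w y * (c * ∑ k, Q y k * D2 u y k i))
          * Real.exp (g y)) x (es j) := by
      rw [D2_eq, hev.fderiv_eq]
    have hS : HasFDerivAt (fun y => c * ∑ k, Q y k * D2 u y k i)
        (c • ∑ k : Fin n, (Q x k • fderiv ℝ (fun y => D2 u y k i) x
          + D2 u x k i • fderiv ℝ (fun z => fderiv ℝ u z (es k)) x)) x :=
      (HasFDerivAt.fun_sum fun k _ => (hQk k).fun_mul (hHk k i)).const_mul c
    have htot := ((hψ i).fun_add ((hwd x hx).fun_mul hS)).fun_mul ((hgd x hx).exp)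
    rw [hstep, htot.fderiv]
    simp only [ContinuousLinearMap.add_apply, ContinuousLinearMap.smul_apply,
      ContinuousLinearMap.sum_apply, smul_eq_mul, nsmul_eq_mul]
    rw [hψapp i j, hval x hx j]
    have hfin : ∑ k : Fin n, (Q x k * fderiv ℝ (fun y => D2 u y k i) x (es j)
        + D2 u x k i * fderiv ℝ (fun z => fderiv ℝ u z (es k)) x (es j))
        = ∑ k, (D2 u x k j * D2 u x k i + Q x k * T k i j) := by
      refine Finset.sum_congr rfl fun k _ => ?_
      have e1 : fderiv ℝ (fun y => D2 u y k i) x (es j) = T k i j := rfl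
      have e2 : fderiv ℝ (fun z => fderiv ℝ u z (es k)) x (es j) = D2 u x k j := rfl
      rw [e1, e2]
      ring
    rw [hfin]
    simp only [hDgdef, hc]
    push_cast
    field_simp
    ring
  -- gradient of η at x
  have hgradη : ∀ k, gradient η x k = (Dw k + w x * Dg k) * Real.exp (g x) := by
    intro k
    rw [gradient_coord, hηfd x hx k]
  -- matrix identities at x
  set d : ℝ := (Hess u x).det with hd
  have hd0 : d ≠ 0 := hρ0 x hxc
  have hwx : w x = d⁻¹ := hw x hxc
  have hAdef : U x = d • (Hess u x)⁻¹ := hU x hxc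
  have hHxsym : (Hess u x)ᵀ = Hess u x := by
    ext i j
    exact hsymH x hx j i
  have hAsym : ∀ i j, U x i j = U x j i := by
    intro i j
    have hinv : ((Hess u x)⁻¹)ᵀ = (Hess u x)⁻¹ := by
      rw [Matrix.transpose_nonsing_inv, hHxsym]
    have h2 : (Hess u x)⁻¹ j i = (Hess u x)⁻¹ i j := by
      have h3 := congrFun (congrFun hinv i) j
      rw [Matrix.transpose_apply] at h3
      exact h3
    rw [hAdef]
    simp only [Matrix.smul_apply, smul_eq_mul]
    rw [h2]
  have hmul : U x * Hess u x = d • 1 := by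
    rw [hAdef, Matrix.smul_mul, Matrix.nonsing_inv_mul _ (isUnit_iff_ne_zero.mpr hd0)]
  have hAH : ∀ i k, ∑ j, U x i j * D2 u x j k = if i = k then d else 0 := by
    intro i k
    have h1 := congrFun (congrFun hmul i) k
    rw [Matrix.mul_apply] at h1
    have h2 : (d • (1 : Matrix (Fin n) (Fin n) ℝ)) i k = if i = k then d else 0 := by
      simp [Matrix.smul_apply, Matrix.one_apply, mul_ite]
    rw [h2] at h1
    exact h1
  have hAH2 : ∀ k j, ∑ i, U x i j * D2 u x k i = if k = j then d else 0 := by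
    intro k j
    have h1 : ∑ i, U x i j * D2 u x k i = ∑ i, U x j i * D2 u x i k := by
      refine Finset.sum_congr rfl fun i _ => ?_
      rw [hAsym i j, hsymH x hx k i]
    rw [h1, hAH j k]
    by_cases h : j = k
    · subst h; simp
    · simp [h, Ne.symm h]
  -- Jacobi's formula at x
  have hρ' : HasFDerivAt ρ
      (∑ i, ∑ j, (Hess u x).adjugate j i • fderiv ℝ (fun y => D2 u y i j) x) x :=
    jacobi (fun i j => hHk i j)
  set Pk : Fin n → ℝ := fun k => ∑ i, ∑ j, (Hess u x).adjugate j i * T i j k with hPkdef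
  have hadj : (Hess u x).adjugate = U x := by
    rw [hAdef, Matrix.inv_def, smul_smul, ← hd, Ring.inverse_eq_inv', mul_inv_cancel₀ hd0, one_smul]
  have hDw : ∀ k, Dw k = -(d ^ 2)⁻¹ * Pk k := by
    intro k
    have h1 := (hasDerivAt_inv (hρ0 x hxc)).comp_hasFDerivAt x hρ'
    have h2 : HasFDerivAt w (-(ρ x ^ 2)⁻¹ •
        (∑ i, ∑ j, (Hess u x).adjugate j i • fderiv ℝ (fun y => D2 u y i j) x)) x :=
      h1.congr_of_eventuallyEq (hwev x hx)
    have h3 : Dw k = (-(ρ x ^ 2)⁻¹ • (∑ i, ∑ j, (Hess u x).adjugate j i •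
        fderiv ℝ (fun y => D2 u y i j) x)) (es k) := by
      rw [hDwdef]
      show fderiv ℝ w x (es k) = _
      rw [h2.fderiv]
    rw [h3]
    simp only [ContinuousLinearMap.coe_smul', Pi.smul_apply, ContinuousLinearMap.coe_sum',
      Finset.sum_apply, smul_eq_mul, Finset.mul_sum]
    have hρx : ρ x = d := hd.symm
    rw [hρx, hPkdef, Finset.mul_sum]
    refine Finset.sum_congr rfl fun i _ => ?_
    rw [Finset.mul_sum]
  -- symmetry of third derivatives
  have hTs1 : ∀ k i j, T k i j = T i k j := by
    intro k i j
    have hev : (fun y => D2 u y k i) =ᶠ[nhds x] (fun y => D2 u y i k) := by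
      filter_upwards [hΩo.mem_nhds hx] with z hz
      exact hsymH z hz k i
    show fderiv ℝ (fun y => D2 u y k i) x (es j) = fderiv ℝ (fun y => D2 u y i k) x (es j)
    rw [hev.fderiv_eq]
  have hTs2 : ∀ k i j, T k i j = T k j i := by
    intro k i j
    have hpk2 : ContDiffAt ℝ 2 (fun z => fderiv ℝ u z (es k)) x :=
      (hpkC k x hx).of_le (by norm_num)
    have hs : IsSymmSndFDerivAt ℝ (fun z => fderiv ℝ u z (es k)) x :=
      (hpkC k x hx).isSymmSndFDerivAt (by norm_num)
    calc T k i j = fderiv ℝ (fderiv ℝ (fun z => fderiv ℝ u z (es k))) x (es j) (es i) :=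
          hbridge (fun z => fderiv ℝ u z (es k)) x hpk2 i j
      _ = fderiv ℝ (fderiv ℝ (fun z => fderiv ℝ u z (es k))) x (es i) (es j) :=
          hs (es j) (es i)
      _ = T k j i := (hbridge (fun z => fderiv ℝ u z (es k)) x hpk2 j i).symm
  -- contractions
  have hconI : ∀ j, ∑ i, U x i j * Dg i = c * d * Q x j := by
    intro j
    calc ∑ i, U x i j * Dg i
        = ∑ i, ∑ k, c * (Q x k * (U x i j * D2 u x k i)) := by
          refine Finset.sum_congr rfl fun i _ => ?_
          have e1 : Dg i = c * ∑ k, Q x k * D2 u x k i := rfl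
          rw [e1, Finset.mul_sum, Finset.mul_sum]
          exact Finset.sum_congr rfl fun k _ => by ring
      _ = ∑ k, ∑ i, c * (Q x k * (U x i j * D2 u x k i)) := Finset.sum_comm
      _ = ∑ k, c * (Q x k * (if k = j then d else 0)) := by
          refine Finset.sum_congr rfl fun k _ => ?_
          rw [← Finset.mul_sum]
          congr 1
          rw [← Finset.mul_sum]
          congr 1
          exact hAH2 k j
      _ = c * d * Q x j := by
          simp only [mul_ite, mul_zero, Finset.sum_ite_eq', Finset.mem_univ, if_true]
          ring
  have hconJ : ∀ i, ∑ j, U x i j * Dg j = c * d * Q x i := by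
    intro i
    calc ∑ j, U x i j * Dg j = ∑ j, U x j i * Dg j :=
          Finset.sum_congr rfl fun j _ => by rw [hAsym i j]
      _ = c * d * Q x i := hconI i
  -- abbreviations for the scalar sums
  set qDw : ℝ := ∑ k, Q x k * Dw k with hqDw
  set qDg : ℝ := ∑ k, Q x k * Dg k with hqDg
  set qPk : ℝ := ∑ k, Q x k * Pk k with hqPk
  set trH : ℝ := ∑ k, D2 u x k k with htrH
  have hS1 : ∑ i, ∑ j, U x i j * D2 w x i j = f x / ε := hPDE x hx
  have hS2 : ∑ i, ∑ j, U x i j * (Dw j * Dg i) = c * d * qDw := by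
    calc ∑ i, ∑ j, U x i j * (Dw j * Dg i)
        = ∑ j, ∑ i, U x i j * (Dw j * Dg i) := Finset.sum_comm
      _ = ∑ j, Dw j * ∑ i, U x i j * Dg i := by
          refine Finset.sum_congr rfl fun j _ => ?_
          rw [Finset.mul_sum]
          exact Finset.sum_congr rfl fun i _ => by ring
      _ = ∑ j, Dw j * (c * d * Q x j) :=
          Finset.sum_congr rfl fun j _ => by rw [hconI j]
      _ = c * d * qDw := by
          rw [hqDw, Finset.mul_sum]
          exact Finset.sum_congr rfl fun j _ => by ring
  have hPkU : ∀ k, ∑ i, ∑ j, U x i j * T k i j = Pk k := by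
    intro k
    rw [hPkdef]
    refine Finset.sum_congr rfl fun i _ => Finset.sum_congr rfl fun j _ => ?_
    rw [hTs1 k i j, hTs2 i k j, hadj, hAsym i j]
  have hS3a : ∀ j, ∑ i, U x i j * (∑ k, D2 u x k j * D2 u x k i) = D2 u x j j * d := by
    intro j
    calc ∑ i, U x i j * ∑ k, D2 u x k j * D2 u x k i
        = ∑ i, ∑ k, D2 u x k j * (U x i j * D2 u x k i) := by
          refine Finset.sum_congr rfl fun i _ => ?_
          rw [Finset.mul_sum]
          exact Finset.sum_congr rfl fun k _ => by ring
      _ = ∑ k, ∑ i, D2 u x k j * (U x i j * D2 u x k i) := Finset.sum_comm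
      _ = ∑ k, D2 u x k j * (if k = j then d else 0) := by
          refine Finset.sum_congr rfl fun k _ => ?_
          rw [← Finset.mul_sum, hAH2 k j]
      _ = D2 u x j j * d := by
          simp only [mul_ite, mul_zero, Finset.sum_ite_eq', Finset.mem_univ, if_true]
  have hS3 : ∑ i, ∑ j, U x i j
        * (w x * (c * ∑ k, (D2 u x k j * D2 u x k i + Q x k * T k i j)))
      = w x * c * (d * trH + qPk) := by
    have key : ∑ i, ∑ j, U x i j * (∑ k, (D2 u x k j * D2 u x k i + Q x k * T k i j))
        = d * trH + qPk := by
      have h1 : ∀ i, ∑ j, U x i j * ∑ k, (D2 u x k j * D2 u x k i + Q x k * T k i j)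
          = (∑ j, U x i j * ∑ k, D2 u x k j * D2 u x k i)
            + ∑ j, U x i j * ∑ k, Q x k * T k i j := by
        intro i
        rw [← Finset.sum_add_distrib]
        refine Finset.sum_congr rfl fun j _ => ?_
        rw [Finset.sum_add_distrib, mul_add]
      calc ∑ i, ∑ j, U x i j * (∑ k, (D2 u x k j * D2 u x k i + Q x k * T k i j))
          = (∑ i, ∑ j, U x i j * ∑ k, D2 u x k j * D2 u x k i)
            + ∑ i, ∑ j, U x i j * ∑ k, Q x k * T k i j := by
            rw [← Finset.sum_add_distrib]
            exact Finset.sum_congr rfl fun i _ => h1 i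
        _ = d * trH + qPk := by
            congr 1
            · rw [Finset.sum_comm]
              calc ∑ j, ∑ i, U x i j * ∑ k, D2 u x k j * D2 u x k i
                  = ∑ j, D2 u x j j * d := Finset.sum_congr rfl fun j _ => hS3a j
                _ = d * trH := by
                    rw [htrH, Finset.mul_sum]
                    exact Finset.sum_congr rfl fun j _ => by ring
            · calc ∑ i, ∑ j, U x i j * ∑ k, Q x k * T k i j
                  = ∑ i, ∑ j, ∑ k, Q x k * (U x i j * T k i j) := by
                    refine Finset.sum_congr rfl fun i _ => Finset.sum_congr rfl fun j _ => ?_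
                    rw [Finset.mul_sum]
                    exact Finset.sum_congr rfl fun k _ => by ring
                _ = ∑ i, ∑ k, ∑ j, Q x k * (U x i j * T k i j) :=
                    Finset.sum_congr rfl fun i _ => Finset.sum_comm
                _ = ∑ k, ∑ i, ∑ j, Q x k * (U x i j * T k i j) := Finset.sum_comm
                _ = ∑ k, Q x k * ∑ i, ∑ j, U x i j * T k i j := by
                    refine Finset.sum_congr rfl fun k _ => ?_
                    rw [Finset.mul_sum]
                    refine Finset.sum_congr rfl fun i _ => ?_
                    rw [Finset.mul_sum]
                _ = ∑ k, Q x k * Pk k :=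
                    Finset.sum_congr rfl fun k _ => by rw [hPkU k]
                _ = qPk := by rw [hqPk]
    calc ∑ i, ∑ j, U x i j * (w x * (c * ∑ k, (D2 u x k j * D2 u x k i + Q x k * T k i j)))
        = w x * c * ∑ i, ∑ j, U x i j * (∑ k, (D2 u x k j * D2 u x k i + Q x k * T k i j)) := by
          rw [Finset.mul_sum]
          refine Finset.sum_congr rfl fun i _ => ?_
          rw [Finset.mul_sum]
          exact Finset.sum_congr rfl fun j _ => by ring
      _ = w x * c * (d * trH + qPk) := by rw [key]
  have hS4 : ∑ i, ∑ j, U x i j * ((Dw i + w x * Dg i) * Dg j)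
      = c * d * qDw + w x * (c * d * qDg) := by
    calc ∑ i, ∑ j, U x i j * ((Dw i + w x * Dg i) * Dg j)
        = ∑ i, (Dw i + w x * Dg i) * ∑ j, U x i j * Dg j := by
          refine Finset.sum_congr rfl fun i _ => ?_
          rw [Finset.mul_sum]
          exact Finset.sum_congr rfl fun j _ => by ring
      _ = ∑ i, (Dw i + w x * Dg i) * (c * d * Q x i) :=
          Finset.sum_congr rfl fun i _ => by rw [hconJ i]
      _ = ∑ i, (c * d * (Q x i * Dw i) + (w x * (c * d)) * (Q x i * Dg i)) :=
          Finset.sum_congr rfl fun i _ => by ring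
      _ = c * d * qDw + w x * (c * d * qDg) := by
          rw [Finset.sum_add_distrib, ← Finset.mul_sum, ← Finset.mul_sum, hqDw, hqDg]
          ring
  have hqDwPk : qDw = -(d ^ 2)⁻¹ * qPk := by
    rw [hqDw, hqPk]
    calc ∑ k, Q x k * Dw k = ∑ k, -(d ^ 2)⁻¹ * (Q x k * Pk k) :=
          Finset.sum_congr rfl fun k _ => by rw [hDw k]; ring
      _ = -(d ^ 2)⁻¹ * ∑ k, Q x k * Pk k := by rw [← Finset.mul_sum]
  -- expansion of the main sum
  have hexpand : ∑ i, ∑ j, U x i j * D2 η x i j =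
      ((∑ i, ∑ j, U x i j * D2 w x i j)
        + (∑ i, ∑ j, U x i j * (Dw j * Dg i))
        + (∑ i, ∑ j, U x i j
            * (w x * (c * ∑ k, (D2 u x k j * D2 u x k i + Q x k * T k i j))))
        + (∑ i, ∑ j, U x i j * ((Dw i + w x * Dg i) * Dg j))) * Real.exp (g x) := by
    have h1 : ∑ i, ∑ j, U x i j * D2 η x i j
        = (∑ i, ∑ j, U x i j * (D2 w x i j + Dw j * Dg i
            + w x * (c * ∑ k, (D2 u x k j * D2 u x k i + Q x k * T k i j))
            + (Dw i + w x * Dg i) * Dg j)) * Real.exp (g x) := by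
      rw [Finset.sum_mul]
      refine Finset.sum_congr rfl fun i _ => ?_
      rw [Finset.sum_mul]
      refine Finset.sum_congr rfl fun j _ => ?_
      rw [hD2η i j]
      ring
    rw [h1]
    congr 1
    simp only [mul_add, Finset.sum_add_distrib]
  -- the drift term
  have hdrift : ⟪b x, gradient η x⟫ = (-(d * c) * (qDw + w x * qDg)) * Real.exp (g x) := by
    rw [inner_expand]
    have hbk : ∀ k, b x k = -(d * c) * Q x k := by
      intro k
      rw [hb x]
      show (-((Hess u x).det * (Dstar / ε))) • (Q x) k = -(d * c) * Q x k
      rw [← hd, ← hc]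
      simp [smul_eq_mul]
    calc ∑ k, b x k * gradient η x k
        = ∑ k, (-(d * c) * Q x k) * ((Dw k + w x * Dg k) * Real.exp (g x)) := by
          refine Finset.sum_congr rfl fun k _ => ?_
          rw [hbk k, hgradη k]
      _ = (∑ k, (-(d * c) * (Q x k * Dw k) + (-(d * c) * w x) * (Q x k * Dg k)))
            * Real.exp (g x) := by
          rw [Finset.sum_mul]
          exact Finset.sum_congr rfl fun k _ => by ring
      _ = (-(d * c) * (qDw + w x * qDg)) * Real.exp (g x) := by
          rw [Finset.sum_add_distrib, ← Finset.mul_sum, ← Finset.mul_sum, hqDw, hqDg]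
          ring
  -- put everything together
  clear_value c Q g ρ Dw Dg T Pk d qDw qDg qPk trH
  rw [hgF x, hexpand, hS1, hS2, hS3, hS4, hdrift]
  rw [hqDwPk, hwx, hc]
  field_simp
  ring
end

section
/- Under the normalization B₁(0) ⊂ T⁻¹(S_u(x₀,h)) ⊂ B_n(0) with T x = A_h x + b_h, and λ ≤ det D²u ≤ Λ, the determinant of A_h satisfies C(n,λ,Λ)⁻¹ h^{n/2} ≤ det A_h ≤ C(n,λ,Λ) h^{n/2}. -/
open RealInnerProductSpace MeasureTheory

/-- The section `S_u(z,h)` of a convex function `u` on `Ω`. -/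
noncomputable def sectMA {n : ℕ} (Ω : Set (EuclideanSpace ℝ (Fin n)))
    (u : EuclideanSpace ℝ (Fin n) → ℝ) (z : EuclideanSpace ℝ (Fin n)) (h : ℝ) :
    Set (EuclideanSpace ℝ (Fin n)) :=
  {y ∈ Ω | u y < u z + ⟪gradient u z, y - z⟫ + h}

open Filter Set Topology Matrix

variable {n : ℕ} {Ω : Set (EuclideanSpace ℝ (Fin n))} {u : EuclideanSpace ℝ (Fin n) → ℝ}

lemma aux_localmin_dd {g g' : ℝ → ℝ} {g'' : ℝ} {s : Set ℝ}
    (hs : IsOpen s) (h0 : (0:ℝ) ∈ s)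
    (hd : ∀ t ∈ s, HasDerivAt g (g' t) t)
    (hd' : HasDerivAt g' g'' 0)
    (hmin : IsLocalMin g 0) : 0 ≤ g'' := by
  by_contra hneg
  push_neg at hneg
  have hg'0 : g' 0 = 0 := hmin.hasDerivAt_eq_zero (hd 0 h0)
  have hslope : Tendsto (slope g' 0) (𝓝[>] (0:ℝ)) (𝓝 g'') :=
    (hasDerivAt_iff_tendsto_slope.mp hd').mono_left
      (nhdsWithin_mono _ (fun t ht => ne_of_gt ht))
  have hev1 : ∀ᶠ t in 𝓝[>] (0:ℝ), slope g' 0 t < 0 :=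
    hslope.eventually_lt_const hneg
  have hev2 : ∀ᶠ t in 𝓝[>] (0:ℝ), g 0 ≤ g t :=
    hmin.filter_mono nhdsWithin_le_nhds
  obtain ⟨ε, hε, hball⟩ := Metric.isOpen_iff.mp hs 0 h0
  obtain ⟨δ, hδ, hIoo⟩ := (mem_nhdsGT_iff_exists_Ioo_subset).mp (hev1.and hev2)
  set t₀ : ℝ := min δ ε / 2 with ht₀def
  have hδ' : (0:ℝ) < δ := hδ
  have ht₀pos : 0 < t₀ := by positivity
  have ht₀δ : t₀ < δ := by
    have h1 : t₀ ≤ δ / 2 := by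
      apply div_le_div_of_nonneg_right (min_le_left _ _)
      norm_num
    linarith
  have ht₀ε : t₀ < ε := by
    have h1 : t₀ ≤ ε / 2 := by
      apply div_le_div_of_nonneg_right (min_le_right _ _)
      norm_num
    linarith
  have hsub : Icc (0:ℝ) t₀ ⊆ s := by
    intro x hx
    apply hball
    simp only [Metric.mem_ball, Real.dist_eq, sub_zero]
    rw [abs_of_nonneg hx.1]
    linarith [hx.2]
  obtain ⟨ξ, hξ, hξeq⟩ := exists_hasDerivAt_eq_slope g g' ht₀pos
    (fun x hx => (hd x (hsub hx)).continuousAt.continuousWithinAt)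
    (fun x hx => hd x (hsub ⟨le_of_lt hx.1, le_of_lt hx.2⟩))
  have hξI : ξ ∈ Ioo (0:ℝ) δ := ⟨hξ.1, hξ.2.trans ht₀δ⟩
  have h1 := (hIoo hξI).1
  have h2 := (hIoo ⟨ht₀pos, ht₀δ⟩).2
  rw [slope_def_field, hg'0, sub_zero, sub_zero] at h1
  have hnum : g' ξ < 0 := by
    rcases div_neg_iff.mp h1 with ⟨_, hb⟩ | ⟨ha, _⟩
    · linarith [hξ.1]
    · exact ha
  have hpos : (0:ℝ) ≤ g' ξ := by
    rw [hξeq, sub_zero]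
    apply div_nonneg (by linarith) ht₀pos.le
  linarith


variable {n : ℕ} {Ω : Set (EuclideanSpace ℝ (Fin n))} {u : EuclideanSpace ℝ (Fin n) → ℝ}

lemma aux_hasfderiv (hΩ : IsOpen Ω) (hu : ContDiffOn ℝ 2 u Ω)
    {y : EuclideanSpace ℝ (Fin n)} (hy : y ∈ Ω) :
    HasFDerivAt u (fderiv ℝ u y) y :=
  ((hu.differentiableOn (by norm_num)).differentiableAt (hΩ.mem_nhds hy)).hasFDerivAt

lemma aux_hasfderiv2 (hΩ : IsOpen Ω) (hu : ContDiffOn ℝ 2 u Ω)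
    {y : EuclideanSpace ℝ (Fin n)} (hy : y ∈ Ω) :
    HasFDerivAt (fderiv ℝ u) (fderiv ℝ (fderiv ℝ u) y) y := by
  have h1 : ContDiffOn ℝ 1 (fderiv ℝ u) Ω := by
    exact hu.fderiv_of_isOpen (m := 1) hΩ (by norm_num)
  exact ((h1.differentiableOn one_ne_zero).differentiableAt (hΩ.mem_nhds hy)).hasFDerivAt

lemma aux_D2 (hΩ : IsOpen Ω) (hu : ContDiffOn ℝ 2 u Ω)
    {x : EuclideanSpace ℝ (Fin n)} (hx : x ∈ Ω) (i j : Fin n) :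
    D2 u x i j
      = fderiv ℝ (fderiv ℝ u) x (EuclideanSpace.single j 1) (EuclideanSpace.single i 1) := by
  have h := (aux_hasfderiv2 hΩ hu hx).clm_apply
    (hasFDerivAt_const (EuclideanSpace.single i (1:ℝ)) x)
  have h2 := h.fderiv
  unfold D2
  rw [h2]
  simp

lemma aux_symm (hΩ : IsOpen Ω) (hu : ContDiffOn ℝ 2 u Ω)
    {x : EuclideanSpace ℝ (Fin n)} (hx : x ∈ Ω) (a b : EuclideanSpace ℝ (Fin n)) :
    fderiv ℝ (fderiv ℝ u) x a b = fderiv ℝ (fderiv ℝ u) x b a :=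
  second_derivative_symmetric_of_eventually
    (Filter.eventually_of_mem (hΩ.mem_nhds hx) (fun y hy => aux_hasfderiv hΩ hu hy))
    (aux_hasfderiv2 hΩ hu hx) a b

lemma aux_vsum (v : EuclideanSpace ℝ (Fin n)) :
    v = ∑ i, v i • (EuclideanSpace.single i (1:ℝ)) := by
  have := (EuclideanSpace.basisFun (Fin n) ℝ).sum_repr v
  simp only [EuclideanSpace.basisFun_repr, EuclideanSpace.basisFun_apply] at this
  exact this.symm

lemma aux_qf_expand (hΩ : IsOpen Ω) (hu : ContDiffOn ℝ 2 u Ω)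
    {x : EuclideanSpace ℝ (Fin n)} (hx : x ∈ Ω) (v : EuclideanSpace ℝ (Fin n)) :
    (v : Fin n → ℝ) ⬝ᵥ (Hess u x *ᵥ (v : Fin n → ℝ))
      = fderiv ℝ (fderiv ℝ u) x v v := by
  set f'' := fderiv ℝ (fderiv ℝ u) x with hf''
  have h1 : ∀ wv : EuclideanSpace ℝ (Fin n),
      f'' v wv = ∑ i, v i * f'' (EuclideanSpace.single i 1) wv := by
    intro wv
    conv_lhs => rw [aux_vsum v]
    rw [map_sum, ContinuousLinearMap.coe_sum', Finset.sum_apply]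
    exact Finset.sum_congr rfl fun i _ => by rw [_root_.map_smul]; simp
  have h2 : ∀ i : Fin n, f'' (EuclideanSpace.single i 1) v
      = ∑ j, v j * f'' (EuclideanSpace.single i 1) (EuclideanSpace.single j 1) := by
    intro i
    conv_lhs => rw [aux_vsum v]
    rw [map_sum]
    exact Finset.sum_congr rfl fun j _ => by rw [_root_.map_smul]; simp
  have hexp : f'' v v = ∑ i, ∑ j, v i * v j
      * f'' (EuclideanSpace.single i 1) (EuclideanSpace.single j 1) := by
    rw [h1 v]
    refine Finset.sum_congr rfl fun i _ => ?_
    rw [h2 i, Finset.mul_sum]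
    exact Finset.sum_congr rfl fun j _ => by ring
  have hdot : (v : Fin n → ℝ) ⬝ᵥ (Hess u x *ᵥ (v : Fin n → ℝ))
      = ∑ i, ∑ j, v i * (Hess u x i j * v j) := by
    simp [dotProduct, Matrix.mulVec, Finset.mul_sum]
  rw [hdot, hexp]
  refine Finset.sum_congr rfl fun i _ => Finset.sum_congr rfl fun j _ => ?_
  have hHij : Hess u x i j = f'' (EuclideanSpace.single i 1) (EuclideanSpace.single j 1) := by
    show D2 u x i j = _
    rw [aux_D2 hΩ hu hx i j, aux_symm hΩ hu hx]
  rw [hHij]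
  ring

lemma aux_dirderiv1 (hΩ : IsOpen Ω) (hu : ContDiffOn ℝ 2 u Ω)
    {x v : EuclideanSpace ℝ (Fin n)} {t : ℝ} (ht : x + t • v ∈ Ω) :
    HasDerivAt (fun s : ℝ => u (x + s • v)) (fderiv ℝ u (x + t • v) v) t := by
  have hγ : HasDerivAt (fun s : ℝ => x + s • v) v t := by
    simpa using ((hasDerivAt_id t).smul_const v).const_add x
  exact (aux_hasfderiv hΩ hu ht).comp_hasDerivAt t hγ

lemma aux_dirderiv2 (hΩ : IsOpen Ω) (hu : ContDiffOn ℝ 2 u Ω)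
    {x : EuclideanSpace ℝ (Fin n)} (hx : x ∈ Ω) (v : EuclideanSpace ℝ (Fin n)) :
    HasDerivAt (fun s : ℝ => fderiv ℝ u (x + s • v) v)
      (fderiv ℝ (fderiv ℝ u) x v v) 0 := by
  have hγ : HasDerivAt (fun s : ℝ => x + s • v) v 0 := by
    simpa using ((hasDerivAt_id (0:ℝ)).smul_const v).const_add x
  have hx' : x + (0:ℝ) • v ∈ Ω := by simpa using hx
  have hψ : HasFDerivAt (fun y => fderiv ℝ u y v)
      ((fderiv ℝ u (x + (0:ℝ) • v)).comp 0
        + (fderiv ℝ (fderiv ℝ u) (x + (0:ℝ) • v)).flip v) (x + (0:ℝ) • v) :=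
    (aux_hasfderiv2 hΩ hu hx').clm_apply (hasFDerivAt_const v _)
  have := hψ.comp_hasDerivAt 0 hγ
  simp at this
  exact this

lemma aux_poly_deriv (α β δ t : ℝ) :
    HasDerivAt (fun s : ℝ => α + β * s + δ * s ^ 2) (β + 2 * δ * t) t := by
  have h := (((hasDerivAt_id t).const_mul β).const_add α).add ((hasDerivAt_pow 2 t).const_mul δ)
  exact h.congr_deriv (by ring)

lemma aux_line_min (hΩ : IsOpen Ω) (hu : ContDiffOn ℝ 2 u Ω)
    {x v : EuclideanSpace ℝ (Fin n)} (hx : x ∈ Ω) (α β δ : ℝ)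
    (hmin : IsLocalMin (fun t : ℝ => u (x + t • v) + (α + β * t + δ * t ^ 2)) 0) :
    0 ≤ fderiv ℝ (fderiv ℝ u) x v v + 2 * δ := by
  set s : Set ℝ := {t : ℝ | x + t • v ∈ Ω} with hs
  have hsopen : IsOpen s := by
    have hcont : Continuous (fun t : ℝ => x + t • v) := by continuity
    exact hΩ.preimage hcont
  have h0 : (0:ℝ) ∈ s := by simp [hs, hx]
  refine aux_localmin_dd (g' := fun t =>
      fderiv ℝ u (x + t • v) v + (β + 2 * δ * t)) hsopen h0 ?_ ?_ hmin
  · intro t ht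
    exact (aux_dirderiv1 hΩ hu ht).add (aux_poly_deriv α β δ t)
  · have h2 := (aux_dirderiv2 hΩ hu hx v).add
      (((hasDerivAt_id (0:ℝ)).const_mul (2*δ)).const_add β)
    simp at h2
    exact h2

lemma aux_line_max (hΩ : IsOpen Ω) (hu : ContDiffOn ℝ 2 u Ω)
    {x v : EuclideanSpace ℝ (Fin n)} (hx : x ∈ Ω) (α β δ : ℝ)
    (hmax : IsLocalMax (fun t : ℝ => u (x + t • v) + (α + β * t + δ * t ^ 2)) 0) :
    fderiv ℝ (fderiv ℝ u) x v v + 2 * δ ≤ 0 := by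
  set s : Set ℝ := {t : ℝ | x + t • v ∈ Ω} with hs
  have hsopen : IsOpen s := by
    have hcont : Continuous (fun t : ℝ => x + t • v) := by continuity
    exact hΩ.preimage hcont
  have h0 : (0:ℝ) ∈ s := by simp [hs, hx]
  have key : (0:ℝ) ≤ -(fderiv ℝ (fderiv ℝ u) x v v + 2 * δ) := by
    refine aux_localmin_dd (g := fun t : ℝ => -(u (x + t • v) + (α + β * t + δ * t ^ 2)))
      (g' := fun t => -(fderiv ℝ u (x + t • v) v + (β + 2 * δ * t))) hsopen h0 ?_ ?_ hmax.neg
    · intro t ht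
      exact ((aux_dirderiv1 hΩ hu ht).add (aux_poly_deriv α β δ t)).neg
    · have h2 := ((aux_dirderiv2 hΩ hu hx v).add
        (((hasDerivAt_id (0:ℝ)).const_mul (2*δ)).const_add β)).neg
      rw [mul_one] at h2
      exact h2
  linarith

lemma aux_psd (hΩ : IsOpen Ω) (hconv : ConvexOn ℝ Ω u) (hu : ContDiffOn ℝ 2 u Ω)
    {x : EuclideanSpace ℝ (Fin n)} (hx : x ∈ Ω) (v : EuclideanSpace ℝ (Fin n)) :
    0 ≤ fderiv ℝ (fderiv ℝ u) x v v := by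
  set s : Set ℝ := {t : ℝ | x + t • v ∈ Ω ∧ x + t • (-v) ∈ Ω} with hs
  have hsopen : IsOpen s := by
    have h1 : Continuous (fun t : ℝ => x + t • v) := by continuity
    have h2 : Continuous (fun t : ℝ => x + t • (-v)) := by continuity
    exact (hΩ.preimage h1).inter (hΩ.preimage h2)
  have h0 : (0:ℝ) ∈ s := by simp [hs, hx]
  have key : (0:ℝ) ≤ fderiv ℝ (fderiv ℝ u) x v v + fderiv ℝ (fderiv ℝ u) x (-v) (-v) := by
    refine aux_localmin_dd (g := fun t : ℝ => u (x + t • v) + u (x + t • (-v)))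
      (g' := fun t => fderiv ℝ u (x + t • v) v + fderiv ℝ u (x + t • (-v)) (-v))
      hsopen h0 ?_ ?_ ?_
    · intro t ht
      exact (aux_dirderiv1 hΩ hu ht.1).add (aux_dirderiv1 hΩ hu ht.2)
    · exact (aux_dirderiv2 hΩ hu hx v).add (aux_dirderiv2 hΩ hu hx (-v))
    · have hmem : s ∈ 𝓝 (0:ℝ) := hsopen.mem_nhds h0
      refine Filter.eventually_of_mem hmem (fun t ht => ?_)
      have hcomb := hconv.2 ht.1 ht.2 (by norm_num : (0:ℝ) ≤ 1/2) (by norm_num : (0:ℝ) ≤ 1/2)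
        (by norm_num : (1:ℝ)/2 + 1/2 = 1)
      have hmid : (1/2:ℝ) • (x + t • v) + (1/2:ℝ) • (x + t • (-v)) = x := by
        rw [smul_neg]
        have : (x + t • v) + (x + -(t • v)) = (2:ℝ) • x := by
          rw [two_smul]; abel
        rw [← smul_add, this, smul_smul]
        norm_num
      rw [hmid] at hcomb
      simp only [smul_eq_mul] at hcomb
      show u (x + (0:ℝ) • v) + u (x + (0:ℝ) • (-v)) ≤ u (x + t • v) + u (x + t • (-v))
      simp only [zero_smul, add_zero]
      linarith
  have hneg : fderiv ℝ (fderiv ℝ u) x (-v) (-v) = fderiv ℝ (fderiv ℝ u) x v v := by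
    rw [map_neg]
    simp
  rw [hneg] at key
  linarith

lemma aux_support (hΩ : IsOpen Ω) (hΩc : Convex ℝ Ω) (hconv : ConvexOn ℝ Ω u)
    (hu : ContDiffOn ℝ 2 u Ω) {x₀ y : EuclideanSpace ℝ (Fin n)}
    (hx₀ : x₀ ∈ Ω) (hy : y ∈ Ω) :
    u x₀ + fderiv ℝ u x₀ (y - x₀) ≤ u y := by
  set φ : ℝ → ℝ := fun t => u (x₀ + t • (y - x₀)) with hφ
  set I : Set ℝ := {t : ℝ | x₀ + t • (y - x₀) ∈ Ω} with hI
  have hIcc : Icc (0:ℝ) 1 ⊆ I := by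
    intro t ht
    have hmem := hΩc hx₀ hy (by linarith [ht.1, ht.2] : 0 ≤ 1 - t) ht.1 (by ring)
    have h2 : (1 - t) • x₀ + t • y = x₀ + t • (y - x₀) := by
      rw [smul_sub, sub_smul, one_smul]; abel
    rw [h2] at hmem
    exact hmem
  have heq : ∀ t : ℝ, (AffineMap.lineMap x₀ y) t = x₀ + t • (y - x₀) := by
    intro t; rw [AffineMap.lineMap_apply]; simp [vsub_eq_sub]; abel
  have hφconv : ConvexOn ℝ I φ := by
    have hcomp := hconv.comp_affineMap (AffineMap.lineMap x₀ y)
    have hIeq : I = (AffineMap.lineMap x₀ y) ⁻¹' Ω := by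
      ext t
      simp only [hI, Set.mem_setOf_eq, Set.mem_preimage, heq t]
    have hfeq : φ = u ∘ (AffineMap.lineMap x₀ y) := funext fun t => by
      simp [hφ, heq t]
    rw [hIeq, hfeq]
    exact hcomp
  have hd0 : HasDerivAt φ (fderiv ℝ u x₀ (y - x₀)) 0 := by
    have h0m : x₀ + (0:ℝ) • (y - x₀) ∈ Ω := by simpa using hx₀
    have := aux_dirderiv1 hΩ hu h0m
    simpa using this
  have hslope : Tendsto (slope φ 0) (𝓝[>] (0:ℝ)) (𝓝 (fderiv ℝ u x₀ (y - x₀))) :=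
    (hasDerivAt_iff_tendsto_slope.mp hd0).mono_left
      (nhdsWithin_mono _ (fun t ht => ne_of_gt ht))
  have hbound : ∀ᶠ t in 𝓝[>] (0:ℝ), slope φ 0 t ≤ φ 1 - φ 0 := by
    have hIoo : Ioo (0:ℝ) 1 ∈ 𝓝[>] (0:ℝ) :=
      Ioo_mem_nhdsGT_of_mem ⟨le_refl 0, zero_lt_one⟩
    refine Filter.eventually_of_mem hIoo (fun t ht => ?_)
    have hsec := hφconv.secant_mono (hIcc ⟨le_refl 0, zero_le_one⟩)
      (hIcc ⟨ht.1.le, ht.2.le⟩) (hIcc ⟨zero_le_one, le_refl 1⟩)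
      (ne_of_gt ht.1) one_ne_zero ht.2.le
    rw [slope_def_field]
    calc (φ t - φ 0) / (t - 0) = (φ t - φ 0) / (t - 0) := rfl
      _ ≤ (φ 1 - φ 0) / (1 - 0) := hsec
      _ = φ 1 - φ 0 := by norm_num
  have hle : fderiv ℝ u x₀ (y - x₀) ≤ φ 1 - φ 0 := le_of_tendsto hslope hbound
  have hφ1 : φ 1 = u y := by simp [hφ]
  have hφ0 : φ 0 = u x₀ := by simp [hφ]
  rw [hφ1, hφ0] at hle
  linarith

lemma aux_quad_line (A : EuclideanSpace ℝ (Fin n) ≃L[ℝ] EuclideanSpace ℝ (Fin n))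
    (bb G x v : EuclideanSpace ℝ (Fin n)) (κ₀ c r2 t : ℝ) :
    -(κ₀ + ⟪G, x + t • v⟫) - c/2 * (‖A.symm (x + t • v - bb)‖^2 - r2)
      = (-(κ₀ + ⟪G, x⟫) - c/2 * (‖A.symm (x - bb)‖^2 - r2))
        + (-⟪G, v⟫ - c * ⟪A.symm (x - bb), A.symm v⟫) * t
        + (-(c/2 * ‖A.symm v‖^2)) * t^2 := by
  have h1 : ⟪G, x + t • v⟫ = ⟪G, x⟫ + t * ⟪G, v⟫ := by
    rw [inner_add_right, real_inner_smul_right]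
  have h2 : A.symm (x + t • v - bb) = A.symm (x - bb) + t • A.symm v := by
    have : x + t • v - bb = (x - bb) + t • v := by abel
    rw [this, map_add, _root_.map_smul]
  have h3 : ‖A.symm (x - bb) + t • A.symm v‖^2
      = ‖A.symm (x - bb)‖^2 + 2 * (t * ⟪A.symm (x - bb), A.symm v⟫)
        + t^2 * ‖A.symm v‖^2 := by
    rw [norm_add_sq_real, real_inner_smul_right, norm_smul]
    rw [mul_pow]
    simp [sq_abs]
  rw [h1, h2, h3]
  ring

lemma aux_barrier_min (hΩ : IsOpen Ω) (hu : ContDiffOn ℝ 2 u Ω)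
    {S : Set (EuclideanSpace ℝ (Fin n))} (hS : IsOpen S) (hSΩ : S ⊆ Ω)
    {xs : EuclideanSpace ℝ (Fin n)} (hxs : xs ∈ S)
    (A : EuclideanSpace ℝ (Fin n) ≃L[ℝ] EuclideanSpace ℝ (Fin n))
    (bb G : EuclideanSpace ℝ (Fin n)) (κ₀ c r2 : ℝ)
    (hmin : IsMinOn (fun x => u x - (κ₀ + ⟪G, x⟫)
      - c/2 * (‖A.symm (x - bb)‖^2 - r2)) S xs)
    (v : EuclideanSpace ℝ (Fin n)) :
    c * ‖A.symm v‖^2 ≤ fderiv ℝ (fderiv ℝ u) xs v v := by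
  set α := -(κ₀ + ⟪G, xs⟫) - c/2 * (‖A.symm (xs - bb)‖^2 - r2) with hα
  set β := -⟪G, v⟫ - c * ⟪A.symm (xs - bb), A.symm v⟫ with hβ
  set δ := -(c/2 * ‖A.symm v‖^2) with hδ
  have hloc : IsLocalMin (fun t : ℝ => u (xs + t • v) + (α + β * t + δ * t ^ 2)) 0 := by
    have hI : {t : ℝ | xs + t • v ∈ S} ∈ 𝓝 (0:ℝ) := by
      have hcont : Continuous (fun t : ℝ => xs + t • v) := by continuity
      exact (hS.preimage hcont).mem_nhds (by simp [hxs])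
    refine Filter.eventually_of_mem hI (fun t ht => ?_)
    have h1 := hmin ht
    have h2 := aux_quad_line A bb G xs v κ₀ c r2 t
    have h3 := aux_quad_line A bb G xs v κ₀ c r2 0
    simp only [Set.mem_setOf_eq] at ht h1
    show u (xs + 0 • v) + (α + β * 0 + δ * 0 ^ 2) ≤ u (xs + t • v) + (α + β * t + δ * t ^ 2)
    rw [hα, hβ, hδ, ← aux_quad_line A bb G xs v κ₀ c r2 t,
      ← aux_quad_line A bb G xs v κ₀ c r2 0]
    simp only [zero_smul, add_zero]
    have h1' : u xs - (κ₀ + ⟪G, xs⟫) - c/2 * (‖A.symm (xs - bb)‖^2 - r2)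
        ≤ u (xs + t • v) - (κ₀ + ⟪G, xs + t • v⟫)
          - c/2 * (‖A.symm (xs + t • v - bb)‖^2 - r2) := h1
    linarith
  have := aux_line_min hΩ hu (hSΩ hxs) α β δ hloc
  rw [hδ] at this
  linarith

lemma aux_barrier_max (hΩ : IsOpen Ω) (hu : ContDiffOn ℝ 2 u Ω)
    {S : Set (EuclideanSpace ℝ (Fin n))} (hS : IsOpen S) (hSΩ : S ⊆ Ω)
    {xs : EuclideanSpace ℝ (Fin n)} (hxs : xs ∈ S)
    (A : EuclideanSpace ℝ (Fin n) ≃L[ℝ] EuclideanSpace ℝ (Fin n))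
    (bb G : EuclideanSpace ℝ (Fin n)) (κ₀ c r2 : ℝ)
    (hmax : IsMaxOn (fun x => u x - (κ₀ + ⟪G, x⟫)
      - c/2 * (‖A.symm (x - bb)‖^2 - r2)) S xs)
    (v : EuclideanSpace ℝ (Fin n)) :
    fderiv ℝ (fderiv ℝ u) xs v v ≤ c * ‖A.symm v‖^2 := by
  set α := -(κ₀ + ⟪G, xs⟫) - c/2 * (‖A.symm (xs - bb)‖^2 - r2) with hα
  set β := -⟪G, v⟫ - c * ⟪A.symm (xs - bb), A.symm v⟫ with hβ
  set δ := -(c/2 * ‖A.symm v‖^2) with hδ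
  have hloc : IsLocalMax (fun t : ℝ => u (xs + t • v) + (α + β * t + δ * t ^ 2)) 0 := by
    have hI : {t : ℝ | xs + t • v ∈ S} ∈ 𝓝 (0:ℝ) := by
      have hcont : Continuous (fun t : ℝ => xs + t • v) := by continuity
      exact (hS.preimage hcont).mem_nhds (by simp [hxs])
    refine Filter.eventually_of_mem hI (fun t ht => ?_)
    have h1 := hmax ht
    have h2 := aux_quad_line A bb G xs v κ₀ c r2 t
    simp only [Set.mem_setOf_eq] at ht h1
    show u (xs + t • v) + (α + β * t + δ * t ^ 2) ≤ u (xs + 0 • v) + (α + β * 0 + δ * 0 ^ 2)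
    rw [hα, hβ, hδ, ← aux_quad_line A bb G xs v κ₀ c r2 t,
      ← aux_quad_line A bb G xs v κ₀ c r2 0]
    simp only [zero_smul, add_zero]
    have h1' : u (xs + t • v) - (κ₀ + ⟪G, xs + t • v⟫)
          - c/2 * (‖A.symm (xs + t • v - bb)‖^2 - r2)
        ≤ u xs - (κ₀ + ⟪G, xs⟫) - c/2 * (‖A.symm (xs - bb)‖^2 - r2) := h1
    linarith
  have := aux_line_max hΩ hu (hSΩ hxs) α β δ hloc
  rw [hδ] at this
  linarith

lemma aux_qf_eq {n : ℕ} (H B : Matrix (Fin n) (Fin n) ℝ) (hB : IsUnit B.det)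
    (w : Fin n → ℝ) :
    w ⬝ᵥ ((B⁻¹ᵀ * H * B⁻¹) *ᵥ w) = (B⁻¹ *ᵥ w) ⬝ᵥ (H *ᵥ (B⁻¹ *ᵥ w)) := by
  rw [Matrix.mul_assoc, ← Matrix.mulVec_mulVec, Matrix.dotProduct_mulVec _ (B⁻¹ᵀ),
    Matrix.vecMul_transpose, ← Matrix.mulVec_mulVec]

lemma aux_hermitian {n : ℕ} (H B : Matrix (Fin n) (Fin n) ℝ) (hH : Hᵀ = H) :
    (B⁻¹ᵀ * H * B⁻¹).IsHermitian := by
  have : (B⁻¹ᵀ * H * B⁻¹)ᵀ = B⁻¹ᵀ * H * B⁻¹ := by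
    rw [Matrix.transpose_mul, Matrix.transpose_mul, Matrix.transpose_transpose, hH,
      Matrix.mul_assoc]
  exact (Matrix.conjTranspose_eq_transpose_of_trivial _).trans this

lemma aux_unit_norm {n : ℕ} {M : Matrix (Fin n) (Fin n) ℝ} (hM : M.IsHermitian) (i : Fin n) :
    (⇑(hM.eigenvectorBasis i) : Fin n → ℝ) ⬝ᵥ ⇑(hM.eigenvectorBasis i) = 1 := by
  have h1 : ‖hM.eigenvectorBasis i‖ = 1 := hM.eigenvectorBasis.orthonormal.1 i
  have h2 : (⇑(hM.eigenvectorBasis i) : Fin n → ℝ) ⬝ᵥ ⇑(hM.eigenvectorBasis i)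
      = @inner ℝ _ _ (hM.eigenvectorBasis i) (hM.eigenvectorBasis i) := by
    rw [PiLp.inner_apply]
    simp [dotProduct, sq]
  rw [h2, real_inner_self_eq_norm_sq, h1]; norm_num

lemma aux_eig_qf {n : ℕ} {M : Matrix (Fin n) (Fin n) ℝ} (hM : M.IsHermitian) (i : Fin n) :
    (⇑(hM.eigenvectorBasis i) : Fin n → ℝ) ⬝ᵥ (M *ᵥ ⇑(hM.eigenvectorBasis i))
      = hM.eigenvalues i := by
  rw [hM.mulVec_eigenvectorBasis, dotProduct_smul, smul_eq_mul, aux_unit_norm, mul_one]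

lemma aux_det_ge {n : ℕ} {H B : Matrix (Fin n) (Fin n) ℝ} {c : ℝ}
    (hc : 0 ≤ c) (hH : Hᵀ = H) (hB : IsUnit B.det)
    (hQ : ∀ v : Fin n → ℝ, c * ((B *ᵥ v) ⬝ᵥ (B *ᵥ v)) ≤ v ⬝ᵥ (H *ᵥ v)) :
    c ^ n * B.det ^ 2 ≤ H.det := by
  set M := B⁻¹ᵀ * H * B⁻¹ with hMdef
  have hM : M.IsHermitian := aux_hermitian H B hH
  have hqf : ∀ w : Fin n → ℝ, c * (w ⬝ᵥ w) ≤ w ⬝ᵥ (M *ᵥ w) := by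
    intro w
    rw [aux_qf_eq H B hB]
    have hw : B *ᵥ (B⁻¹ *ᵥ w) = w := by
      rw [Matrix.mulVec_mulVec, Matrix.mul_nonsing_inv _ hB, Matrix.one_mulVec]
    calc c * (w ⬝ᵥ w) = c * ((B *ᵥ (B⁻¹ *ᵥ w)) ⬝ᵥ (B *ᵥ (B⁻¹ *ᵥ w))) := by rw [hw]
      _ ≤ _ := hQ _
  have heig : ∀ i, c ≤ hM.eigenvalues i := by
    intro i
    have := hqf (⇑(hM.eigenvectorBasis i))
    rw [aux_unit_norm hM i, aux_eig_qf hM i, mul_one] at this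
    exact this
  have hdetM : c ^ n ≤ M.det := by
    rw [hM.det_eq_prod_eigenvalues]
    calc c ^ n = ∏ _i : Fin n, c := by simp
      _ ≤ ∏ i, hM.eigenvalues i := Finset.prod_le_prod (fun _ _ => hc) (fun i _ => heig i)
  have hdetM2 : M.det = H.det * (B.det⁻¹) ^ 2 := by
    rw [hMdef, Matrix.det_mul, Matrix.det_mul, Matrix.det_transpose, Matrix.det_nonsing_inv,
      Ring.inverse_eq_inv']
    ring
  have hBd : B.det ≠ 0 := hB.ne_zero
  have hpos : (0:ℝ) < B.det ^ 2 := by positivity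
  calc c ^ n * B.det ^ 2 ≤ M.det * B.det ^ 2 := by nlinarith [hdetM, hpos]
    _ = H.det := by rw [hdetM2]; field_simp

lemma aux_det_le {n : ℕ} {H B : Matrix (Fin n) (Fin n) ℝ} {c : ℝ}
    (hc : 0 ≤ c) (hH : Hᵀ = H) (hB : IsUnit B.det)
    (hQ : ∀ v : Fin n → ℝ, v ⬝ᵥ (H *ᵥ v) ≤ c * ((B *ᵥ v) ⬝ᵥ (B *ᵥ v)))
    (hpsd : ∀ v : Fin n → ℝ, 0 ≤ v ⬝ᵥ (H *ᵥ v)) :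
    H.det ≤ c ^ n * B.det ^ 2 := by
  set M := B⁻¹ᵀ * H * B⁻¹ with hMdef
  have hM : M.IsHermitian := aux_hermitian H B hH
  have hqf : ∀ w : Fin n → ℝ, w ⬝ᵥ (M *ᵥ w) ≤ c * (w ⬝ᵥ w) ∧ 0 ≤ w ⬝ᵥ (M *ᵥ w) := by
    intro w
    rw [aux_qf_eq H B hB]
    have hw : B *ᵥ (B⁻¹ *ᵥ w) = w := by
      rw [Matrix.mulVec_mulVec, Matrix.mul_nonsing_inv _ hB, Matrix.one_mulVec]
    constructor
    · calc (B⁻¹ *ᵥ w) ⬝ᵥ (H *ᵥ (B⁻¹ *ᵥ w)) ≤ c * ((B *ᵥ (B⁻¹ *ᵥ w)) ⬝ᵥ (B *ᵥ (B⁻¹ *ᵥ w))) :=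
            hQ _
        _ = c * (w ⬝ᵥ w) := by rw [hw]
    · exact hpsd _
  have heig : ∀ i, hM.eigenvalues i ≤ c ∧ 0 ≤ hM.eigenvalues i := by
    intro i
    have := hqf (⇑(hM.eigenvectorBasis i))
    rw [aux_unit_norm hM i, aux_eig_qf hM i, mul_one] at this
    exact this
  have hdetM : M.det ≤ c ^ n := by
    rw [hM.det_eq_prod_eigenvalues]
    calc (∏ i, hM.eigenvalues i) ≤ ∏ _i : Fin n, c :=
          Finset.prod_le_prod (fun i _ => (heig i).2) (fun i _ => (heig i).1)
      _ = c ^ n := by simp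
  have hdetM2 : M.det = H.det * (B.det⁻¹) ^ 2 := by
    rw [hMdef, Matrix.det_mul, Matrix.det_mul, Matrix.det_transpose, Matrix.det_nonsing_inv,
      Ring.inverse_eq_inv']
    ring
  have hBd : B.det ≠ 0 := hB.ne_zero
  have hpos : (0:ℝ) < B.det ^ 2 := by positivity
  have : H.det * (B.det⁻¹)^2 ≤ c ^n := hdetM2 ▸ hdetM
  calc H.det = (H.det * (B.det⁻¹)^2) * B.det ^2 := by field_simp
    _ ≤ c ^ n * B.det ^ 2 := by nlinarith [this, hpos]

lemma aux_hess_symm (hΩ : IsOpen Ω) (hu : ContDiffOn ℝ 2 u Ω)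
    {x : EuclideanSpace ℝ (Fin n)} (hx : x ∈ Ω) : (Hess u x)ᵀ = Hess u x := by
  ext i j
  show Hess u x j i = Hess u x i j
  show D2 u x j i = D2 u x i j
  rw [aux_D2 hΩ hu hx, aux_D2 hΩ hu hx, aux_symm hΩ hu hx]

lemma aux_coord (A : EuclideanSpace ℝ (Fin n) ≃L[ℝ] EuclideanSpace ℝ (Fin n))
    (v : EuclideanSpace ℝ (Fin n)) :
    (LinearMap.toMatrix (EuclideanSpace.basisFun (Fin n) ℝ).toBasis
        (EuclideanSpace.basisFun (Fin n) ℝ).toBasis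
        ((A.symm : EuclideanSpace ℝ (Fin n) →L[ℝ] EuclideanSpace ℝ (Fin n)) :
          EuclideanSpace ℝ (Fin n) →ₗ[ℝ] EuclideanSpace ℝ (Fin n)))
      *ᵥ (v : Fin n → ℝ) = (A.symm v : Fin n → ℝ) := by
  set bas := (EuclideanSpace.basisFun (Fin n) ℝ).toBasis with hbas
  have hrepr : ∀ y : EuclideanSpace ℝ (Fin n), ⇑(bas.repr y) = (y : Fin n → ℝ) := by
    intro y
    funext i
    rw [hbas, OrthonormalBasis.coe_toBasis_repr_apply, EuclideanSpace.basisFun_repr]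
  have := LinearMap.toMatrix_mulVec_repr bas bas
    ((A.symm : EuclideanSpace ℝ (Fin n) →L[ℝ] EuclideanSpace ℝ (Fin n)) :
      EuclideanSpace ℝ (Fin n) →ₗ[ℝ] EuclideanSpace ℝ (Fin n)) v
  rw [hrepr, hrepr] at this
  exact this

lemma aux_dot_norm (y : EuclideanSpace ℝ (Fin n)) :
    (y : Fin n → ℝ) ⬝ᵥ (y : Fin n → ℝ) = ‖y‖^2 := by
  have h2 : (y : Fin n → ℝ) ⬝ᵥ (y : Fin n → ℝ) = @inner ℝ _ _ y y := by
    rw [PiLp.inner_apply]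
    simp [dotProduct, sq]
  rw [h2, real_inner_self_eq_norm_sq]

lemma aux_pow_half {x : ℝ} (hx : 0 ≤ x) : (x^2) ^ ((1:ℝ)/2) = x := by
  rw [← Real.rpow_natCast x 2, ← Real.rpow_mul hx]
  norm_num

lemma aux_hpow {h : ℝ} (hh : 0 ≤ h) (n : ℕ) : (h^n) ^ ((1:ℝ)/2) = h ^ ((n:ℝ)/2) := by
  rw [← Real.rpow_natCast h n, ← Real.rpow_mul hh]
  ring_nf

lemma aux_rpow_n {X : ℝ} (hX : 0 < X) {n : ℕ} (hn : n ≠ 0) :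
    (X ^ ((1:ℝ)/n)) ^ n = X := by
  rw [← Real.rpow_natCast (X ^ ((1:ℝ)/n)) n, ← Real.rpow_mul hX.le]
  rw [one_div, inv_mul_cancel₀ (by exact_mod_cast hn : (n:ℝ) ≠ 0), Real.rpow_one]

set_option maxHeartbeats 2000000 in
/-- for the John normalization `T x = A_h x + b_h` of a section, the
determinant of `A_h` is comparable to `h^{n/2}`. -/
theorem stmt7 (n : ℕ) (hn : 2 ≤ n) (lam Lam : ℝ) (hlam : 0 < lam) (hlamLam : lam ≤ Lam) :
    ∃ C > (0:ℝ), ∀ (Ω : Set (EuclideanSpace ℝ (Fin n)))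
      (u : EuclideanSpace ℝ (Fin n) → ℝ) (x₀ : EuclideanSpace ℝ (Fin n)) (h : ℝ)
      (A : EuclideanSpace ℝ (Fin n) ≃L[ℝ] EuclideanSpace ℝ (Fin n))
      (b : EuclideanSpace ℝ (Fin n)),
      IsOpen Ω → Convex ℝ Ω → StrictConvexOn ℝ Ω u → ContDiffOn ℝ 2 u Ω →
      (∀ x ∈ Ω, lam ≤ (Hess u x).det ∧ (Hess u x).det ≤ Lam) →
      x₀ ∈ Ω → 0 < h →
      closure (sectMA Ω u x₀ h) ⊆ Ω → IsCompact (closure (sectMA Ω u x₀ h)) →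
      Metric.ball (0 : EuclideanSpace ℝ (Fin n)) 1 ⊆
        (fun x => A x + b) ⁻¹' (sectMA Ω u x₀ h) →
      (fun x => A x + b) ⁻¹' (sectMA Ω u x₀ h) ⊆
        Metric.ball (0 : EuclideanSpace ℝ (Fin n)) n →
      C⁻¹ * h ^ ((n : ℝ) / 2) ≤
          |LinearMap.det ((A : EuclideanSpace ℝ (Fin n) →L[ℝ] EuclideanSpace ℝ (Fin n)) :
            EuclideanSpace ℝ (Fin n) →ₗ[ℝ] EuclideanSpace ℝ (Fin n))| ∧
        |LinearMap.det ((A : EuclideanSpace ℝ (Fin n) →L[ℝ] EuclideanSpace ℝ (Fin n)) :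
            EuclideanSpace ℝ (Fin n) →ₗ[ℝ] EuclideanSpace ℝ (Fin n))| ≤
          C * h ^ ((n : ℝ) / 2) := by
  have hnn : 0 < n := lt_of_lt_of_le two_pos hn
  have hen2 : (0:ℝ) < (n:ℝ) := by exact_mod_cast hnn
  have hen0 : ((n:ℝ)) ≠ 0 := ne_of_gt hen2
  have hLam1 : (0:ℝ) < Lam + 1 := by linarith
  set K₂ : ℝ := ((2 / (n:ℝ)^2)^n / (Lam+1)) ^ ((1:ℝ)/2) with hK₂
  set K₁ : ℝ := ((2^(n+1)) / lam) ^ ((1:ℝ)/2) with hK₁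
  have hK₂pos : 0 < K₂ := by
    apply Real.rpow_pos_of_pos
    apply div_pos (pow_pos (div_pos two_pos (pow_pos hen2 2)) n) hLam1
  have hK₁pos : 0 < K₁ := by
    apply Real.rpow_pos_of_pos
    apply div_pos (pow_pos two_pos (n+1)) hlam
  refine ⟨max K₂⁻¹ K₁, lt_of_lt_of_le (inv_pos.mpr hK₂pos) (le_max_left _ _), ?_⟩
  intro Ω u x₀ h A b hΩ hΩc hSC hu hdet hx₀ hh hclos hcomp hball1 hballn
  set adet : ℝ := LinearMap.det ((A : EuclideanSpace ℝ (Fin n) →L[ℝ] EuclideanSpace ℝ (Fin n)) :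
    EuclideanSpace ℝ (Fin n) →ₗ[ℝ] EuclideanSpace ℝ (Fin n)) with hadet
  -- basic objects
  set Gr := gradient u x₀ with hGr
  set κ₀ := u x₀ - ⟪Gr, x₀⟫ + h with hκ₀
  have hℓ : ∀ x, u x₀ + ⟪Gr, x - x₀⟫ + h = κ₀ + ⟪Gr, x⟫ := fun x => by
    rw [inner_sub_right, hκ₀]; ring
  set S := sectMA Ω u x₀ h with hSdef
  have hSsub : S ⊆ Ω := fun y hy => hy.1
  have hSmem : ∀ y, y ∈ S ↔ y ∈ Ω ∧ u y < κ₀ + ⟪Gr, y⟫ := fun y => by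
    rw [hSdef]
    show y ∈ Ω ∧ u y < u x₀ + ⟪Gr, y - x₀⟫ + h ↔ _
    rw [hℓ y]
  have hinnercont : Continuous fun y : EuclideanSpace ℝ (Fin n) => κ₀ + ⟪Gr, y⟫ :=
    continuous_const.add (continuous_const.inner continuous_id)
  have hSopen : IsOpen S := by
    have hcont : ContinuousOn (fun y => u y - (κ₀ + ⟪Gr, y⟫)) Ω :=
      hu.continuousOn.sub hinnercont.continuousOn
    have hSeq : S = Ω ∩ (fun y => u y - (κ₀ + ⟪Gr, y⟫)) ⁻¹' (Set.Iio 0) := by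
      ext y
      rw [hSmem y]
      simp [sub_neg]
    rw [hSeq]
    exact hcont.isOpen_inter_preimage hΩ isOpen_Iio
  have hx₀S : x₀ ∈ S := by
    rw [hSmem, ← hℓ x₀]
    simp [hx₀]
    linarith
  have hbS : b ∈ S := by
    have h0 : (0 : EuclideanSpace ℝ (Fin n)) ∈ Metric.ball (0 : EuclideanSpace ℝ (Fin n)) 1 := by
      simp
    have := hball1 h0
    simpa using this
  -- homeomorphism
  set e : EuclideanSpace ℝ (Fin n) ≃ₜ EuclideanSpace ℝ (Fin n) :=
    A.toHomeomorph.trans (Homeomorph.addRight b) with he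
  have heapp : ∀ x, e x = A x + b := fun x => rfl
  have hesymm : ∀ x, e.symm x = A.symm (x - b) := fun x => by
    show A.symm (x - b) = A.symm (x - b)
    rfl
  have hpre : (fun x => A x + b) ⁻¹' S = e ⁻¹' S := rfl
  have hnormle : ∀ x ∈ closure S, ‖A.symm (x - b)‖ ≤ (n:ℝ) := by
    intro x hx
    have h1 : e.symm x ∈ closure (e ⁻¹' S) := by
      rw [← Homeomorph.preimage_closure]
      exact Set.mem_preimage.mpr (by simpa using hx)
    have h2 : closure (e ⁻¹' S) ⊆ Metric.closedBall 0 (n:ℝ) :=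
      (closure_mono (hpre ▸ hballn)).trans Metric.closure_ball_subset_closedBall
    have := h2 h1
    rw [Metric.mem_closedBall, dist_zero_right] at this
    rw [← hesymm x]
    exact this
  have hnormge : ∀ x ∈ closure S, x ∉ S → 1 ≤ ‖A.symm (x - b)‖ := by
    intro x _ hxnot
    by_contra hlt
    push_neg at hlt
    have : e.symm x ∈ Metric.ball (0 : EuclideanSpace ℝ (Fin n)) 1 := by
      rw [Metric.mem_ball, dist_zero_right, hesymm x]
      exact hlt
    have hmem := hball1 this
    have hx' : A (e.symm x) + b ∈ S := hmem
    rw [← heapp (e.symm x), e.apply_symm_apply x] at hx'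
    exact hxnot hx'
  have hule : ∀ x ∈ closure S, u x ≤ κ₀ + ⟪Gr, x⟫ := by
    intro x hx
    obtain ⟨y, hyS, hylim⟩ := mem_closure_iff_seq_limit.mp hx
    have hxΩ := hclos hx
    have hcontx : ContinuousAt (fun y => u y - (κ₀ + ⟪Gr, y⟫)) x :=
      ((hu.continuousOn.continuousAt (hΩ.mem_nhds hxΩ)).sub hinnercont.continuousAt)
    have htend := hcontx.tendsto.comp hylim
    have hev : ∀ k, u (y k) - (κ₀ + ⟪Gr, y k⟫) ≤ 0 := fun k => by
      have := ((hSmem (y k)).mp (hyS k)).2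
      linarith
    have := le_of_tendsto htend (Filter.Eventually.of_forall hev)
    linarith
  have huge : ∀ x ∈ closure S, x ∉ S → κ₀ + ⟪Gr, x⟫ ≤ u x := by
    intro x hx hxnot
    have hxΩ := hclos hx
    by_contra hlt
    push_neg at hlt
    exact hxnot ((hSmem x).mpr ⟨hxΩ, hlt⟩)
  -- matrices
  set bas := (EuclideanSpace.basisFun (Fin n) ℝ).toBasis with hbas
  set Amat := LinearMap.toMatrix bas bas
    ((A : EuclideanSpace ℝ (Fin n) →L[ℝ] EuclideanSpace ℝ (Fin n)) :
      EuclideanSpace ℝ (Fin n) →ₗ[ℝ] EuclideanSpace ℝ (Fin n)) with hAmat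
  set Bmat := LinearMap.toMatrix bas bas
    ((A.symm : EuclideanSpace ℝ (Fin n) →L[ℝ] EuclideanSpace ℝ (Fin n)) :
      EuclideanSpace ℝ (Fin n) →ₗ[ℝ] EuclideanSpace ℝ (Fin n)) with hBmat
  have hAmatdet : Amat.det = adet := by rw [hAmat, LinearMap.det_toMatrix]
  have hBA : Bmat * Amat = 1 := by
    rw [hBmat, hAmat, ← LinearMap.toMatrix_comp bas bas bas]
    have hid : (((A.symm : EuclideanSpace ℝ (Fin n) →L[ℝ] EuclideanSpace ℝ (Fin n)) :
        EuclideanSpace ℝ (Fin n) →ₗ[ℝ] EuclideanSpace ℝ (Fin n)).comp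
        ((A : EuclideanSpace ℝ (Fin n) →L[ℝ] EuclideanSpace ℝ (Fin n)) :
        EuclideanSpace ℝ (Fin n) →ₗ[ℝ] EuclideanSpace ℝ (Fin n))) = LinearMap.id := by
      ext x
      simp
    rw [hid, LinearMap.toMatrix_id]
  have hdetBA : Bmat.det * adet = 1 := by
    have hd := congrArg Matrix.det hBA
    rw [Matrix.det_mul, hAmatdet, Matrix.det_one] at hd
    exact hd
  have ha0 : adet ≠ 0 := by
    intro h0
    rw [h0, mul_zero] at hdetBA
    exact zero_ne_one hdetBA
  set aa := |adet| with haa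
  have hapos : 0 < aa := abs_pos.mpr ha0
  have hBdetinv : Bmat.det = adet⁻¹ := eq_inv_of_mul_eq_one_left hdetBA
  have hBdet2 : Bmat.det ^ 2 = (aa^2)⁻¹ := by
    rw [hBdetinv, haa, sq_abs, inv_pow]
  have hBunit : IsUnit Bmat.det := by
    rw [hBdetinv]
    exact isUnit_iff_ne_zero.mpr (inv_ne_zero ha0)
  have hclne : (closure S).Nonempty := ⟨x₀, subset_closure hx₀S⟩
  have hbarrcont : ∀ c r2 : ℝ, ContinuousOn
      (fun x => u x - (κ₀ + ⟪Gr, x⟫) - c/2 * (‖A.symm (x - b)‖^2 - r2)) (closure S) := by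
    intro c r2
    apply ContinuousOn.sub
    · exact (hu.continuousOn.mono hclos).sub hinnercont.continuousOn
    · apply Continuous.continuousOn
      apply Continuous.mul continuous_const
      apply Continuous.sub ?_ continuous_const
      exact ((A.symm).continuous.comp (continuous_id.sub continuous_const)).norm.pow 2
  -- lower bound on aa
  have hXpos₂ : (0:ℝ) < (Lam+1) * aa^2 := mul_pos hLam1 (pow_pos hapos 2)
  set c₂ : ℝ := ((Lam+1) * aa^2) ^ ((1:ℝ)/n) with hc₂
  have hc₂pos : 0 < c₂ := Real.rpow_pos_of_pos hXpos₂ _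
  have hc₂n : c₂ ^ n = (Lam+1) * aa^2 := aux_rpow_n hXpos₂ hnn.ne'
  obtain ⟨xs, hxscl, hxsmin⟩ := hcomp.exists_isMinOn hclne (hbarrcont c₂ ((n:ℝ)^2))
  set P : EuclideanSpace ℝ (Fin n) → ℝ :=
    fun x => u x - (κ₀ + ⟪Gr, x⟫) - c₂/2 * (‖A.symm (x - b)‖^2 - (n:ℝ)^2) with hP
  have hPxs : 0 ≤ P xs := by
    by_contra hneg
    push_neg at hneg
    have hxsS : xs ∈ S := by
      by_contra hxsnot
      have h1 := huge xs hxscl hxsnot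
      have h2 := hnormle xs hxscl
      have h3 : ‖A.symm (xs - b)‖^2 ≤ (n:ℝ)^2 := pow_le_pow_left₀ (norm_nonneg _) h2 2
      have h4 : c₂/2 * (‖A.symm (xs - b)‖^2 - (n:ℝ)^2) ≤ 0 :=
        mul_nonpos_of_nonneg_of_nonpos (by linarith) (by linarith)
      have : 0 ≤ P xs := by
        rw [hP]
        dsimp only
        linarith
      linarith
    have hminS : IsMinOn P S xs := fun y hy => hxsmin (subset_closure hy)
    have hqf := aux_barrier_min hΩ hu hSopen hSsub hxsS A b Gr κ₀ c₂ ((n:ℝ)^2) hminS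
    have hHsym := aux_hess_symm hΩ hu (hSsub hxsS)
    have hQge : ∀ v : Fin n → ℝ, c₂ * ((Bmat *ᵥ v) ⬝ᵥ (Bmat *ᵥ v)) ≤ v ⬝ᵥ (Hess u xs *ᵥ v) := by
      intro v
      have hv := hqf (WithLp.toLp 2 v)
      rw [← WithLp.ofLp_toLp (p := 2) v, aux_qf_expand hΩ hu (hSsub hxsS), hBmat,
        aux_coord A (WithLp.toLp 2 v), aux_dot_norm]
      exact hv
    have hdge := aux_det_ge hc₂pos.le hHsym hBunit hQge
    rw [hc₂n, hBdet2] at hdge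
    have hdetub := (hdet xs (hSsub hxsS)).2
    have heq1 : (Lam+1) * aa^2 * (aa^2)⁻¹ = Lam + 1 := by
      field_simp
    rw [heq1] at hdge
    linarith
  have hPx₀' : 0 ≤ P x₀ := le_trans hPxs (hxsmin (subset_closure hx₀S))
  have hx₀val : u x₀ - (κ₀ + ⟪Gr, x₀⟫) = -h := by rw [hκ₀]; ring
  have hz₀ : 0 ≤ ‖A.symm (x₀ - b)‖^2 := by positivity
  have hc₂h : 2*h/(n:ℝ)^2 ≤ c₂ := by
    have h5 : c₂/2 * (‖A.symm (x₀ - b)‖^2 - (n:ℝ)^2) ≤ -h := by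
      have h6 := hPx₀'
      rw [hP] at h6
      dsimp only at h6
      linarith
    have h7 : c₂/2 * (-(n:ℝ)^2) ≤ c₂/2 * (‖A.symm (x₀ - b)‖^2 - (n:ℝ)^2) := by
      apply mul_le_mul_of_nonneg_left (by linarith) (by linarith)
    rw [div_le_iff₀ (by positivity : (0:ℝ) < (n:ℝ)^2)]
    have h8 : c₂/2 * (-(n:ℝ)^2) = -(c₂ * (n:ℝ)^2)/2 := by ring
    linarith
  have hlow : K₂ * h ^ ((n:ℝ)/2) ≤ aa := by
    have h1 : (2*h/(n:ℝ)^2)^n ≤ c₂^n := pow_le_pow_left₀ (by positivity) hc₂h n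
    rw [hc₂n] at h1
    have h2 : (2*h/(n:ℝ)^2)^n / (Lam+1) ≤ aa^2 := by
      rw [div_le_iff₀ hLam1]
      linarith
    have h3 : ((2*h/(n:ℝ)^2)^n / (Lam+1)) ^ ((1:ℝ)/2) ≤ (aa^2) ^ ((1:ℝ)/2) :=
      Real.rpow_le_rpow (by positivity) h2 (by norm_num)
    rw [aux_pow_half hapos.le] at h3
    have h4 : (2*h/(n:ℝ)^2)^n = (2/(n:ℝ)^2)^n * h^n := by
      rw [← mul_pow]
      congr 1
      ring
    have h5 : (2/(n:ℝ)^2)^n * h^n / (Lam+1) = ((2/(n:ℝ)^2)^n/(Lam+1)) * h^n := by ring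
    rw [h4, h5, Real.mul_rpow (by positivity) (by positivity), aux_hpow hh.le] at h3
    rw [hK₂]
    exact h3
  -- upper bound on aa
  have hXpos₁ : (0:ℝ) < (lam/2) * aa^2 := mul_pos (by linarith) (pow_pos hapos 2)
  set c₁ : ℝ := ((lam/2) * aa^2) ^ ((1:ℝ)/n) with hc₁
  have hc₁pos : 0 < c₁ := Real.rpow_pos_of_pos hXpos₁ _
  have hc₁n : c₁ ^ n = (lam/2) * aa^2 := aux_rpow_n hXpos₁ hnn.ne'
  obtain ⟨xt, hxtcl, hxtmax⟩ := hcomp.exists_isMaxOn hclne (hbarrcont c₁ 1)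
  set Qf : EuclideanSpace ℝ (Fin n) → ℝ :=
    fun x => u x - (κ₀ + ⟪Gr, x⟫) - c₁/2 * (‖A.symm (x - b)‖^2 - 1) with hQf
  have hQfb : Qf b ≤ 0 := by
    by_contra hpos
    push_neg at hpos
    have hxtS : xt ∈ S := by
      by_contra hxtnot
      have h1 := hule xt hxtcl
      have h2 := hnormge xt hxtcl hxtnot
      have h3 : 1 ≤ ‖A.symm (xt - b)‖^2 := by nlinarith [norm_nonneg (A.symm (xt - b))]
      have h4 : 0 ≤ c₁/2 * (‖A.symm (xt - b)‖^2 - 1) :=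
        mul_nonneg (by linarith) (by linarith)
      have h5 : Qf xt ≤ 0 := by
        rw [hQf]
        dsimp only
        linarith
      have h6 := hxtmax (subset_closure hbS)
      have : Qf b ≤ Qf xt := h6
      linarith
    have hmaxS : IsMaxOn Qf S xt := fun y hy => hxtmax (subset_closure hy)
    have hqf := aux_barrier_max hΩ hu hSopen hSsub hxtS A b Gr κ₀ c₁ 1 hmaxS
    have hpsd := fun v => aux_psd hΩ hSC.convexOn hu (hSsub hxtS) v
    have hHsym := aux_hess_symm hΩ hu (hSsub hxtS)
    have hQle : ∀ v : Fin n → ℝ, v ⬝ᵥ (Hess u xt *ᵥ v) ≤ c₁ * ((Bmat *ᵥ v) ⬝ᵥ (Bmat *ᵥ v)) := by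
      intro v
      have hv := hqf (WithLp.toLp 2 v)
      rw [← WithLp.ofLp_toLp (p := 2) v, aux_qf_expand hΩ hu (hSsub hxtS), hBmat,
        aux_coord A (WithLp.toLp 2 v), aux_dot_norm]
      exact hv
    have hQpsd : ∀ v : Fin n → ℝ, 0 ≤ v ⬝ᵥ (Hess u xt *ᵥ v) := by
      intro v
      rw [← WithLp.ofLp_toLp (p := 2) v, aux_qf_expand hΩ hu (hSsub hxtS)]
      exact hpsd (WithLp.toLp 2 v)
    have hdle := aux_det_le hc₁pos.le hHsym hBunit hQle hQpsd
    rw [hc₁n, hBdet2] at hdle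
    have hlamle := (hdet xt (hSsub hxtS)).1
    have heq1 : (lam/2) * aa^2 * (aa^2)⁻¹ = lam/2 := by field_simp
    rw [heq1] at hdle
    linarith
  have hsupport := aux_support hΩ hΩc hSC.convexOn hu hx₀ (hSsub hbS)
  have hgrad : ⟪Gr, b - x₀⟫ = fderiv ℝ u x₀ (b - x₀) := by
    rw [hGr, gradient]
    exact InnerProductSpace.toDual_symm_apply
  have hQfbval : Qf b = u b - (κ₀ + ⟪Gr, b⟫) + c₁/2 := by
    rw [hQf]
    dsimp only
    rw [sub_self, map_zero, norm_zero]
    ring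
  have hc₁h : c₁ ≤ 2*h := by
    rw [← hgrad] at hsupport
    have hb1 : κ₀ + ⟪Gr, b⟫ - h ≤ u b := by
      have := hℓ b
      linarith
    rw [hQfbval] at hQfb
    linarith
  have hup : aa ≤ K₁ * h ^ ((n:ℝ)/2) := by
    have h1 : c₁^n ≤ (2*h)^n := pow_le_pow_left₀ hc₁pos.le hc₁h n
    rw [hc₁n] at h1
    have h2 : aa^2 ≤ 2^(n+1) / lam * h^n := by
      rw [div_mul_eq_mul_div, le_div_iff₀ hlam]
      calc aa^2 * lam = (lam/2 * aa^2) * 2 := by ring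
        _ ≤ (2*h)^n * 2 := by linarith
        _ = 2^(n+1) * h^n := by rw [mul_pow, pow_succ]; ring
    have h3 : (aa^2) ^ ((1:ℝ)/2) ≤ (2^(n+1) / lam * h^n) ^ ((1:ℝ)/2) :=
      Real.rpow_le_rpow (by positivity) h2 (by norm_num)
    rw [aux_pow_half hapos.le, Real.mul_rpow (by positivity) (by positivity),
      aux_hpow hh.le] at h3
    rw [hK₁]
    exact h3
  constructor
  · have hK : (max K₂⁻¹ K₁)⁻¹ ≤ K₂ := by
      have h1 : K₂⁻¹ ≤ max K₂⁻¹ K₁ := le_max_left _ _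
      have h2 := inv_anti₀ (inv_pos.mpr hK₂pos) h1
      rwa [inv_inv] at h2
    have h3 := mul_le_mul_of_nonneg_right hK (Real.rpow_nonneg hh.le ((n:ℝ)/2))
    linarith [hlow]
  · have h3 := mul_le_mul_of_nonneg_right (le_max_right K₂⁻¹ K₁)
      (Real.rpow_nonneg hh.le ((n:ℝ)/2))
    linarith [hup]
end
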